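/- arXiv:2102.02990 — 7 statements merged into one kernel-verified Lean document; each statement's English description precedes it below -/
import Mathlib

section
/- If a chart has a LLEE-witness, then it satisfies the loop existence and elimination property LEE. -/
universe u v w

/-- Star expressions over a set `A` of actions. -/
inductive StExp (A : Type u) : Type u
  | zero : StExp A
  | one : StExp A
  | act : A → StExp A
  | add : StExp A → StExp A → StExp A
  | mul : StExp A → StExp A → StExp A
  | star : StExp A → StExp A

namespace StExp

variable {A : Type u}

/-- Immediate termination in Milner's TSS `T(A)`. -/
inductive Term : StExp A → Prop
  | one : Term StExp.one
  | addL {e₁ e₂ : StExp A} : Term e₁ → Term (StExp.add e₁ e₂)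
  | addR {e₁ e₂ : StExp A} : Term e₂ → Term (StExp.add e₁ e₂)
  | mul {e₁ e₂ : StExp A} : Term e₁ → Term e₂ → Term (StExp.mul e₁ e₂)
  | star {e : StExp A} : Term (StExp.star e)

/-- Transitions in Milner's TSS `T(A)`. -/
inductive Step : StExp A → A → StExp A → Prop
  | act {a : A} : Step (StExp.act a) a StExp.one
  | addL {e₁ e₂ e' : StExp A} {a : A} : Step e₁ a e' → Step (StExp.add e₁ e₂) a e'
  | addR {e₁ e₂ e' : StExp A} {a : A} : Step e₂ a e' → Step (StExp.add e₁ e₂) a e'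
  | mulL {e₁ e₂ e₁' : StExp A} {a : A} :
      Step e₁ a e₁' → Step (StExp.mul e₁ e₂) a (StExp.mul e₁' e₂)
  | mulR {e₁ e₂ e₂' : StExp A} {a : A} :
      Term e₁ → Step e₂ a e₂' → Step (StExp.mul e₁ e₂) a e₂'
  | star {e e' : StExp A} {a : A} :
      Step e a e' → Step (StExp.star e) a (StExp.mul e' (StExp.star e))

/-- (Syntactic) star height. -/
def height : StExp A → ℕ
  | .zero => 0
  | .one => 0
  | .act _ => 0
  | .add e₁ e₂ => max e₁.height e₂.height
  | .mul e₁ e₂ => max e₁.height e₂.height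
  | .star e => e.height + 1

end StExp

/-- Stacked star expressions: `E ::= e | E·e | E * e*`. -/
inductive SExp (A : Type u) : Type u
  | up : StExp A → SExp A
  | pr : SExp A → StExp A → SExp A
  | st : SExp A → StExp A → SExp A

namespace SExp

variable {A : Type u}

/-- Projection to star expressions, interpreting `*` as `·`. -/
def proj : SExp A → StExp A
  | .up e => e
  | .pr E e => StExp.mul E.proj e
  | .st E e => StExp.mul E.proj (StExp.star e)

/-- `E` is a star expression (contains no stacked product `*`). -/
def IsStExp : SExp A → Prop
  | .up _ => True
  | .pr E _ => IsStExp E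
  | .st _ _ => False

/-- Star expressions that are not products (canonical arguments of `up`). -/
def UpOk : StExp A → Prop
  | .mul _ _ => False
  | _ => True

/-- Canonical stacked star expressions: products of star expressions are
represented by `pr` rather than by `up` applied to `StExp.mul`. -/
def Canonical : SExp A → Prop
  | .up e => UpOk e
  | .pr E _ => Canonical E
  | .st E _ => Canonical E

/-- Canonical embedding of star expressions into stacked star expressions. -/
def flatUp : StExp A → SExp A
  | .mul e₁ e₂ => SExp.pr (flatUp e₁) e₂
  | e => SExp.up e

/-- Immediate termination for stacked star expressions (TSS `T̲^(*)(A)`). -/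
inductive STerm : SExp A → Prop
  | up {e : StExp A} : StExp.Term e → STerm (SExp.up e)
  | pr {E : SExp A} {e : StExp A} : STerm E → StExp.Term e → STerm (SExp.pr E e)

/-- Transitions of the TSS `T̲^(*)(A)`; labels in `Option A`, where `none`
is the empty-step label `1`. -/
inductive SStep : SExp A → Option A → SExp A → Prop
  | act {a : A} : SStep (SExp.up (StExp.act a)) (some a) (SExp.up StExp.one)
  | addL {e₁ e₂ : StExp A} {a : A} {E' : SExp A} :
      SStep (SExp.up e₁) (some a) E' → SStep (SExp.up (StExp.add e₁ e₂)) (some a) E'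
  | addR {e₁ e₂ : StExp A} {a : A} {E' : SExp A} :
      SStep (SExp.up e₂) (some a) E' → SStep (SExp.up (StExp.add e₁ e₂)) (some a) E'
  | upMulL {e₁ e₂ : StExp A} {l : Option A} {E₁' : SExp A} :
      SStep (SExp.up e₁) l E₁' → SStep (SExp.up (StExp.mul e₁ e₂)) l (SExp.pr E₁' e₂)
  | upMulR {e₁ e₂ : StExp A} {a : A} {E₂' : SExp A} :
      StExp.Term e₁ → SStep (SExp.up e₂) (some a) E₂' →
      SStep (SExp.up (StExp.mul e₁ e₂)) (some a) E₂'
  | upStar {e : StExp A} {a : A} {E' : SExp A} :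
      SStep (SExp.up e) (some a) E' →
      SStep (SExp.up (StExp.star e)) (some a) (SExp.st E' e)
  | prL {E₁ E₁' : SExp A} {e₂ : StExp A} {l : Option A} :
      SStep E₁ l E₁' → SStep (SExp.pr E₁ e₂) l (SExp.pr E₁' e₂)
  | prR {E₁ E₂' : SExp A} {e₂ : StExp A} {a : A} :
      STerm E₁ → SStep (SExp.up e₂) (some a) E₂' → SStep (SExp.pr E₁ e₂) (some a) E₂'
  | stL {E₁ E₁' : SExp A} {e₂ : StExp A} {l : Option A} :
      SStep E₁ l E₁' → SStep (SExp.st E₁ e₂) l (SExp.st E₁' e₂)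
  | stOne {E₁ : SExp A} {e₂ : StExp A} :
      STerm E₁ → SStep (SExp.st E₁ e₂) none (SExp.up (StExp.star e₂))

/-- `1`-transition. -/
def OneStep (E F : SExp A) : Prop := SStep E none F

/-- Transition with an arbitrary label in `A ∪ {1}`. -/
def AStep (E F : SExp A) : Prop := ∃ l, SStep E l F

/-- Induced (proper) transition `E ⇒a E'`: a sequence of `1`-transitions
followed by an `a`-transition. -/
def IStep (E : SExp A) (a : A) (E' : SExp A) : Prop :=
  ∃ F, Relation.ReflTransGen OneStep E F ∧ SStep F (some a) E'

/-- Induced termination `E ↓(1)`: a sequence of `1`-transitions ending in a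
terminating expression. -/
def ITerm (E : SExp A) : Prop :=
  ∃ F, Relation.ReflTransGen OneStep E F ∧ STerm F

/-- `E` is normed: a path to an expression with immediate termination. -/
def Normed (E : SExp A) : Prop :=
  ∃ F, Relation.ReflTransGen AStep E F ∧ STerm F

/-- `E` is normed⁺: a nonempty sequence of induced transitions to an
expression with induced termination. -/
def NormedP (E : SExp A) : Prop :=
  ∃ F, Relation.TransGen (fun X Y => ∃ a : A, IStep X a Y) E F ∧ ITerm F

/-- Induced termination as derived in the extension `T̲ind^(*)(A)`. -/
inductive IndTerm : SExp A → Prop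
  | base {E : SExp A} : STerm E → IndTerm E
  | step {E F : SExp A} : SStep E none F → IndTerm F → IndTerm E

/-- Induced transitions as derived in the extension `T̲ind^(*)(A)`. -/
inductive IndStep : SExp A → A → SExp A → Prop
  | base {E E' : SExp A} {a : A} : SStep E (some a) E' → IndStep E a E'
  | step {E F E' : SExp A} {a : A} : SStep E none F → IndStep F a E' → IndStep E a E'

/-- Marked transitions of the TSS `T̲̂^(*)(A)`: marking label `0` means a body
(`bo`) transition, `n ≥ 1` a loop-entry transition of level `n`. -/
inductive MStep : SExp A → Option A × ℕ → SExp A → Prop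
  | act {a : A} : MStep (SExp.up (StExp.act a)) (some a, 0) (SExp.up StExp.one)
  | addL {e₁ e₂ : StExp A} {a : A} {n : ℕ} {E' : SExp A} :
      MStep (SExp.up e₁) (some a, n) E' → MStep (SExp.up (StExp.add e₁ e₂)) (some a, 0) E'
  | addR {e₁ e₂ : StExp A} {a : A} {n : ℕ} {E' : SExp A} :
      MStep (SExp.up e₂) (some a, n) E' → MStep (SExp.up (StExp.add e₁ e₂)) (some a, 0) E'
  | upMulL {e₁ e₂ : StExp A} {l : Option A × ℕ} {E₁' : SExp A} :
      MStep (SExp.up e₁) l E₁' → MStep (SExp.up (StExp.mul e₁ e₂)) l (SExp.pr E₁' e₂)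
  | upMulR {e₁ e₂ : StExp A} {a : A} {n : ℕ} {E₂' : SExp A} :
      StExp.Term e₁ → MStep (SExp.up e₂) (some a, n) E₂' →
      MStep (SExp.up (StExp.mul e₁ e₂)) (some a, 0) E₂'
  | upStarP {e : StExp A} {a : A} {n : ℕ} {E' : SExp A} :
      NormedP (SExp.up e) → MStep (SExp.up e) (some a, n) E' →
      MStep (SExp.up (StExp.star e)) (some a, e.height + 1) (SExp.st E' e)
  | upStarN {e : StExp A} {a : A} {n : ℕ} {E' : SExp A} :
      ¬ NormedP (SExp.up e) → MStep (SExp.up e) (some a, n) E' →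
      MStep (SExp.up (StExp.star e)) (some a, 0) (SExp.st E' e)
  | prL {E₁ E₁' : SExp A} {e₂ : StExp A} {l : Option A × ℕ} :
      MStep E₁ l E₁' → MStep (SExp.pr E₁ e₂) l (SExp.pr E₁' e₂)
  | prR {E₁ E₂' : SExp A} {e₂ : StExp A} {a : A} {n : ℕ} :
      STerm E₁ → MStep (SExp.up e₂) (some a, n) E₂' →
      MStep (SExp.pr E₁ e₂) (some a, 0) E₂'
  | stL {E₁ E₁' : SExp A} {e₂ : StExp A} {l : Option A × ℕ} :
      MStep E₁ l E₁' → MStep (SExp.st E₁ e₂) l (SExp.st E₁' e₂)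
  | stOne {E₁ : SExp A} {e₂ : StExp A} :
      STerm E₁ → MStep (SExp.st E₁ e₂) (none, 0) (SExp.up (StExp.star e₂))

/-- Body transition `→bo`. -/
def BStep (E F : SExp A) : Prop := ∃ l : Option A, MStep E (l, 0) F

/-- Star height of stacked star expressions. -/
def heightS : SExp A → ℕ
  | .up e => e.height
  | .pr E e => max E.heightS e.height
  | .st E e => max E.heightS (e.height + 1)

end SExp

/-- Applicative contexts of stacked star expressions. -/
inductive AppCtx (A : Type u) : Type u
  | hole : AppCtx A
  | pr : AppCtx A → StExp A → AppCtx A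
  | st : AppCtx A → StExp A → AppCtx A

/-- Filling the hole of an applicative context. -/
def AppCtx.fill {A : Type u} : AppCtx A → SExp A → SExp A
  | .hole, E => E
  | .pr C e, E => SExp.pr (C.fill E) e
  | .st C e, E => SExp.st (C.fill E) e

/-- A labeled transition system with termination. -/
structure LTS (S : Type u) (L : Type v) where
  step : S → L → S → Prop
  term : S → Prop

/-- Bisimulation between two LTSs with termination. -/
def IsBisimulation {S₁ : Type u} {S₂ : Type v} {L : Type w}
    (M₁ : LTS S₁ L) (M₂ : LTS S₂ L) (B : S₁ → S₂ → Prop) : Prop :=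
  (∃ s₁ s₂, B s₁ s₂) ∧
  ∀ s₁ s₂, B s₁ s₂ →
    ((∀ a s₁', M₁.step s₁ a s₁' → ∃ s₂', M₂.step s₂ a s₂' ∧ B s₁' s₂') ∧
     (∀ a s₂', M₂.step s₂ a s₂' → ∃ s₁', M₁.step s₁ a s₁' ∧ B s₁' s₂') ∧
     (M₁.term s₁ ↔ M₂.term s₂))

/-- The star expressions LTS `L(StExp(A))`. -/
def stexpLTS (A : Type u) : LTS (StExp A) A := ⟨StExp.Step, StExp.Term⟩

/-- The induced LTS of the stacked star expressions 1-LTS `L1(StExp^(*)(A))`. -/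
def indSExpLTS (A : Type u) : LTS (SExp A) A := ⟨SExp.IStep, SExp.ITerm⟩

/-- A (rooted) chart. -/
structure Chart (V : Type u) (L : Type v) where
  verts : Set V
  start : V
  step : V → L → V → Prop
  term : V → Prop

/-- Bisimulation between two charts: a bisimulation between the underlying
LTSs that relates the start vertices. -/
def IsChartBisim {V₁ : Type u} {V₂ : Type v} {L : Type w}
    (C₁ : Chart V₁ L) (C₂ : Chart V₂ L) (B : V₁ → V₂ → Prop) : Prop :=
  (∀ x y, B x y → x ∈ C₁.verts ∧ y ∈ C₂.verts) ∧
  B C₁.start C₂.start ∧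
  ∀ x y, B x y →
    ((∀ a x', C₁.step x a x' → ∃ y', C₂.step y a y' ∧ B x' y') ∧
     (∀ a y', C₂.step y a y' → ∃ x', C₁.step x a x' ∧ B x' y') ∧
     (C₁.term x ↔ C₂.term y))

def ChartBisimilar {V₁ : Type u} {V₂ : Type v} {L : Type w}
    (C₁ : Chart V₁ L) (C₂ : Chart V₂ L) : Prop :=
  ∃ B, IsChartBisim C₁ C₂ B

/-- Star expressions reachable from `e` in Milner's LTS. -/
def MReach {A : Type u} (e : StExp A) : Set (StExp A) :=
  {f | Relation.ReflTransGen (fun x y => ∃ a, StExp.Step x a y) e f}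

/-- The chart interpretation `C(e)` of a star expression. -/
def chartInt {A : Type u} (e : StExp A) : Chart (StExp A) A where
  verts := MReach e
  start := e
  step x a y := x ∈ MReach e ∧ StExp.Step x a y
  term x := x ∈ MReach e ∧ StExp.Term x

/-- Stacked star expressions reachable from (the canonical representation of)
`e` in the 1-LTS. -/
def SReach {A : Type u} (e : StExp A) : Set (SExp A) :=
  {F | Relation.ReflTransGen SExp.AStep (SExp.flatUp e) F}

/-- The 1-chart interpretation `C1(e)` of a star expression. -/
def oneChartInt {A : Type u} (e : StExp A) : Chart (SExp A) (Option A) where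
  verts := SReach e
  start := SExp.flatUp e
  step x l y := x ∈ SReach e ∧ SExp.SStep x l y
  term x := x ∈ SReach e ∧ SExp.STerm x

/-- The entry/body-labeled 1-chart interpretation `Ĉ1(e)`. -/
def markedOneChartInt {A : Type u} (e : StExp A) : Chart (SExp A) (Option A × ℕ) where
  verts := SReach e
  start := SExp.flatUp e
  step x l y := x ∈ SReach e ∧ SExp.MStep x l y
  term x := x ∈ SReach e ∧ SExp.STerm x

/-- The induced chart of a 1-chart: induced transitions and induced
termination. -/
def indChart {V : Type u} {A : Type v} (C : Chart V (Option A)) : Chart V A where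
  verts := C.verts
  start := C.start
  step x a y := ∃ u, Relation.ReflTransGen (fun s t => C.step s none t) x u ∧ C.step u (some a) y
  term x := ∃ u, Relation.ReflTransGen (fun s t => C.step s none t) x u ∧ C.term u

/-- An infinite path from the start vertex of a chart. -/
def IsInfPathFrom {V : Type u} {L : Type v} (C : Chart V L) (p : ℕ → V) : Prop :=
  p 0 = C.start ∧ ∀ i, ∃ l, C.step (p i) l (p (i + 1))

/-- Loop chart: (L1) an infinite path from the start vertex exists, (L2) every
infinite path from the start vertex returns to it after a positive number of
transitions, (L3) only the start vertex may terminate. -/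
def IsLoopChart {V : Type u} {L : Type v} (C : Chart V L) : Prop :=
  (∃ p, IsInfPathFrom C p) ∧
  (∀ p, IsInfPathFrom C p → ∃ k, 0 < k ∧ p k = C.start) ∧
  (∀ w ∈ C.verts, C.term w → w = C.start)

namespace LLEE

variable {S : Type u} {L : Type v}

/-- Body transition of an entry/body-labeling. -/
def Body (step : S → L × ℕ → S → Prop) (x y : S) : Prop := ∃ l, step x (l, 0) y

/-- Entry transition of level `n` of an entry/body-labeling. -/
def Entry (step : S → L × ℕ → S → Prop) (n : ℕ) (x y : S) : Prop := ∃ l, step x (l, n) y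

/-- Vertices of the induced subchart at `(v, n)`: on paths that start with an
`→[n]` transition from `v`, continue with body transitions, and halt upon
revisiting `v`. -/
def loopVerts (step : S → L × ℕ → S → Prop) (v : S) (n : ℕ) : Set S :=
  insert v {w | ∃ u, Entry step n v u ∧
    Relation.ReflTransGen (fun x y => Body step x y ∧ x ≠ v) u w}

/-- The induced subchart at `(v, n)`. -/
def subchartAt (step : S → L × ℕ → S → Prop) (term : S → Prop) (v : S) (n : ℕ) :
    Chart S (L × ℕ) where
  verts := loopVerts step v n
  start := v
  step x l y :=
    (x = v ∧ l.2 = n ∧ step x l y) ∨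
    (x ∈ loopVerts step v n ∧ x ≠ v ∧ l.2 = 0 ∧ step x l y)
  term x := x ∈ loopVerts step v n ∧ term x

/-- LLEE-witness conditions (W1)–(W3) for an entry/body-labeled transition
system with transitions `step` and termination `term`. -/
def IsWitness (step : S → L × ℕ → S → Prop) (term : S → Prop) : Prop :=
  (¬ ∃ p : ℕ → S, ∀ i, Body step (p i) (p (i + 1))) ∧
  (∀ v n, 0 < n → (∃ w, Entry step n v w) → IsLoopChart (subchartAt step term v n)) ∧
  (∀ v n, 0 < n → (∃ w, Entry step n v w) →
    ∀ t, t ∈ loopVerts step v n → t ≠ v → ∀ m t', 0 < m → Entry step m t t' → m < n)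

end LLEE

namespace LEE

variable {V : Type u} {L : Type v}

/-- Vertices of the subchart generated from `v` by a set `U` of transitions
from `v`: paths start with a transition in `U` and continue (with arbitrary
transitions) until `v` is reached again. -/
def genVerts (C : Chart V L) (v : V) (U : Set (V × L × V)) : Set V :=
  insert v {w | ∃ u, (∃ l, (v, l, u) ∈ U) ∧
    Relation.ReflTransGen (fun x y => (∃ l, C.step x l y) ∧ x ≠ v) u w}

/-- The subchart generated from `v` by the transitions in `U`. -/
def genSubchart (C : Chart V L) (v : V) (U : Set (V × L × V)) : Chart V L where
  verts := genVerts C v U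
  start := v
  step x l y :=
    (x = v ∧ (v, l, y) ∈ U) ∨
    (x ∈ genVerts C v U ∧ x ≠ v ∧ C.step x l y)
  term x := x ∈ genVerts C v U ∧ C.term x

/-- `U` determines a loop subchart of `C` rooted at `v`. -/
def IsLoopSubchart (C : Chart V L) (v : V) (U : Set (V × L × V)) : Prop :=
  v ∈ C.verts ∧ U.Nonempty ∧
  (∀ t ∈ U, t.1 = v ∧ C.step t.1 t.2.1 t.2.2) ∧
  IsLoopChart (genSubchart C v U)

/-- Elimination of the loop-entry transitions in `U`, followed by removal of
all vertices and transitions that become unreachable. -/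
def elim (C : Chart V L) (U : Set (V × L × V)) : Chart V L :=
  let step' : V → L → V → Prop := fun x l y => C.step x l y ∧ (x, l, y) ∉ U
  let R : Set V := {w | Relation.ReflTransGen (fun x y => ∃ l, step' x l y) C.start w}
  { verts := C.verts ∩ R
    start := C.start
    step := fun x l y => step' x l y ∧ x ∈ R ∧ y ∈ R
    term := fun x => C.term x ∧ x ∈ R }

/-- One step of the loop elimination procedure. -/
def ElimStep (C C' : Chart V L) : Prop :=
  ∃ v U, IsLoopSubchart C v U ∧ C' = elim C U

/-- The chart has an infinite path. -/
def HasInfPath (C : Chart V L) : Prop :=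
  ∃ p : ℕ → V, p 0 ∈ C.verts ∧ ∀ i, ∃ l, C.step (p i) l (p (i + 1))

/-- The loop existence and elimination property LEE: repeated elimination of
loop subcharts results in a chart without an infinite path. -/
def SatisfiesLEE (C : Chart V L) : Prop :=
  ∃ C', Relation.ReflTransGen ElimStep C C' ∧ ¬ HasInfPath C'

end LEE

/-- A maximal path of body transitions from `X` in the entry/body-labeled
1-LTS: finite (of length `len`) or infinite (`len = ⊤`), and if finite then
not extensible by any further body transition. -/
structure BoPath (A : Type u) (X : SExp A) where
  len : ℕ∞
  f : ℕ → SExp A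
  head : f 0 = X
  steps : ∀ i : ℕ, (i : ℕ∞) < len → SExp.BStep (f i) (f (i + 1))
  maximal : ∀ n : ℕ, len = (n : ℕ∞) → ∀ Y, ¬ SExp.BStep (f n) Y

/-- Canonical stacked star expressions (the states of the stacked star
expressions 1-LTS `L1(StExp^(*)(A))`). -/
def CSExp (A : Type u) : Type u := {E : SExp A // SExp.Canonical E}

namespace LLEEAux

open Relation

variable {V : Type u} {L : Type v}

/-- Build an infinite chain inside a set closed under taking successors. -/
lemma exists_inf_chain (r : V → V → Prop) (S : Set V)
    (hS : ∀ z ∈ S, ∃ y, r z y ∧ y ∈ S) {v : V} (hv : v ∈ S) :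
    ∃ p : ℕ → V, p 0 = v ∧ ∀ i, r (p i) (p (i + 1)) := by
  classical
  let g : {z // z ∈ S} → {z // z ∈ S} :=
    fun z => ⟨(hS z.1 z.2).choose, (hS z.1 z.2).choose_spec.2⟩
  refine ⟨fun i => (g^[i] ⟨v, hv⟩).1, rfl, fun i => ?_⟩
  show r (g^[i] ⟨v, hv⟩).1 (g^[i+1] ⟨v, hv⟩).1
  rw [Function.iterate_succ_apply']
  exact (hS _ (g^[i] ⟨v, hv⟩).2).choose_spec.1

lemma cycle_inf_path (r : V → V → Prop) {v u : V} (h1 : r v u)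
    (h2 : ReflTransGen r u v) :
    ∃ p : ℕ → V, p 0 = v ∧ ∀ i, r (p i) (p (i + 1)) := by
  apply exists_inf_chain r {z | ReflTransGen r z v}
  · intro z hz
    rcases (hz : ReflTransGen r z v).cases_head with h | ⟨y, hy, hy'⟩
    · exact ⟨u, h ▸ h1, h2⟩
    · exact ⟨y, hy, hy'⟩
  · exact ReflTransGen.refl

/-- `x` has some loop-entry transition. -/
def HasEntry (mstep : V → L × ℕ → V → Prop) (x : V) : Prop :=
  ∃ n, 0 < n ∧ ∃ y, LLEE.Entry mstep n x y

/-- no vertex in the loop body at `(v,k)` other than `v` has an entry. -/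
def Safe (mstep : V → L × ℕ → V → Prop) (v : V) (k : ℕ) : Prop :=
  ∀ w ∈ LLEE.loopVerts mstep v k, w ≠ v → ¬ HasEntry mstep w

def GoodAt (mstep : V → L × ℕ → V → Prop) (v : V) : Prop :=
  HasEntry mstep v ∧ ∀ k, 0 < k → (∃ y, LLEE.Entry mstep k v y) → Safe mstep v k

lemma loopVerts_start_mem (mstep : V → L × ℕ → V → Prop) (v : V) (n : ℕ) :
    v ∈ LLEE.loopVerts mstep v n := Set.mem_insert _ _

lemma entry_target_mem {mstep : V → L × ℕ → V → Prop} {v u : V} {n : ℕ}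
    (h : LLEE.Entry mstep n v u) : u ∈ LLEE.loopVerts mstep v n :=
  Set.mem_insert_iff.mpr (Or.inr ⟨u, h, ReflTransGen.refl⟩)

lemma loopVerts_closed {mstep : V → L × ℕ → V → Prop} {v w y : V} {n : ℕ}
    (hw : w ∈ LLEE.loopVerts mstep v n) (hwv : w ≠ v) (h : LLEE.Body mstep w y) :
    y ∈ LLEE.loopVerts mstep v n := by
  rcases Set.mem_insert_iff.mp hw with h' | ⟨u, he, hr⟩
  · exact absurd h' hwv
  · exact Set.mem_insert_iff.mpr (Or.inr ⟨u, he, hr.tail ⟨h, hwv⟩⟩)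

lemma loopVerts_mono {s s' : V → L × ℕ → V → Prop} {v : V} {n : ℕ}
    (hE : ∀ u, LLEE.Entry s n v u → LLEE.Entry s' n v u)
    (hB : ∀ x y, LLEE.Body s x y → LLEE.Body s' x y) :
    LLEE.loopVerts s v n ⊆ LLEE.loopVerts s' v n := by
  intro w hw
  rcases Set.mem_insert_iff.mp hw with h' | ⟨u, he, hr⟩
  · exact h' ▸ loopVerts_start_mem _ _ _
  · exact Set.mem_insert_iff.mpr
      (Or.inr ⟨u, hE u he, ReflTransGen.mono (fun x y hxy => ⟨hB x y hxy.1, hxy.2⟩) _ _ hr⟩)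

/-- Existence of a "good" vertex: all its loops have entry-free interiors. -/
lemma exists_good (mstep : V → L × ℕ → V → Prop) (term : V → Prop)
    (hwit : LLEE.IsWitness mstep term) (hx : ∃ x, HasEntry mstep x) :
    ∃ g, GoodAt mstep g := by
  have extract : ∀ x, HasEntry mstep x → ¬ GoodAt mstep x →
      ∃ k w, 0 < k ∧ (∃ y, LLEE.Entry mstep k x y) ∧ w ∈ LLEE.loopVerts mstep x k ∧
        w ≠ x ∧ HasEntry mstep w := by
    intro x hxE hxg
    have : ∃ k, 0 < k ∧ (∃ y, LLEE.Entry mstep k x y) ∧ ¬ Safe mstep x k := by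
      by_contra hcon
      push_neg at hcon
      exact hxg ⟨hxE, fun k hk he => hcon k hk he⟩
    obtain ⟨k, hk, hke, hns⟩ := this
    unfold Safe at hns; push_neg at hns
    obtain ⟨w, hw, hwx, hwe⟩ := hns
    exact ⟨k, w, hk, hke, hw, hwx, hwe⟩
  have main : ∀ m : ℕ, ∀ x, HasEntry mstep x →
      (∀ k, 0 < k → (∃ y, LLEE.Entry mstep k x y) → k < m) → ∃ g, GoodAt mstep g := by
    intro m
    induction m using Nat.strong_induction_on with
    | _ m IH =>
      intro x hxE hbd
      by_cases hg : GoodAt mstep x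
      · exact ⟨x, hg⟩
      · obtain ⟨k, w, hk, hke, hw, hwx, hwe⟩ := extract x hxE hg
        have hbdw : ∀ k', 0 < k' → (∃ y, LLEE.Entry mstep k' w y) → k' < k := by
          rintro k' hk' ⟨y, hy⟩
          exact hwit.2.2 x k hk hke w hw hwx k' y hk' hy
        exact IH k (hbd k hk hke) w hwe hbdw
  obtain ⟨x, hxE⟩ := hx
  by_cases hg : GoodAt mstep x
  · exact ⟨x, hg⟩
  · obtain ⟨k, w, hk, hke, hw, hwx, hwe⟩ := extract x hxE hg
    have hbdw : ∀ k', 0 < k' → (∃ y, LLEE.Entry mstep k' w y) → k' < k := by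
      rintro k' hk' ⟨y, hy⟩
      exact hwit.2.2 x k hk hke w hw hwx k' y hk' hy
    exact main k w hwe hbdw

end LLEEAux
namespace LLEEAux

open Relation

variable {V : Type u} {L : Type v}

/-! ### Generic facts about `LEE.elim` -/

def estep (C : Chart V L) (U : Set (V × L × V)) (x : V) (l : L) (y : V) : Prop :=
  C.step x l y ∧ (x, l, y) ∉ U

def eR (C : Chart V L) (U : Set (V × L × V)) : Set V :=
  {w | Relation.ReflTransGen (fun x y => ∃ l, estep C U x l y) C.start w}

lemma elim_step (C : Chart V L) (U : Set (V × L × V)) :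
    (LEE.elim C U).step = fun x l y => estep C U x l y ∧ x ∈ eR C U ∧ y ∈ eR C U := rfl

lemma elim_verts (C : Chart V L) (U : Set (V × L × V)) :
    (LEE.elim C U).verts = C.verts ∩ eR C U := rfl

lemma elim_term (C : Chart V L) (U : Set (V × L × V)) :
    (LEE.elim C U).term = fun x => C.term x ∧ x ∈ eR C U := rfl

lemma elim_start (C : Chart V L) (U : Set (V × L × V)) :
    (LEE.elim C U).start = C.start := rfl

lemma eR_closed {C : Chart V L} {U : Set (V × L × V)} {x : V} (hx : x ∈ eR C U)
    {l : L} {y : V} (h : estep C U x l y) : y ∈ eR C U :=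
  Relation.ReflTransGen.tail hx ⟨l, h⟩

lemma elim_basic (C : Chart V L) (U : Set (V × L × V)) (hfin : C.verts.Finite)
    (hstart : C.start ∈ C.verts)
    (hstep : ∀ x l y, C.step x l y → x ∈ C.verts ∧ y ∈ C.verts)
    (hterm : ∀ x, C.term x → x ∈ C.verts) :
    (LEE.elim C U).verts.Finite ∧ (LEE.elim C U).start ∈ (LEE.elim C U).verts ∧
    (∀ x l y, (LEE.elim C U).step x l y → x ∈ (LEE.elim C U).verts ∧ y ∈ (LEE.elim C U).verts) ∧
    (∀ x, (LEE.elim C U).term x → x ∈ (LEE.elim C U).verts) := by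
  refine ⟨hfin.subset (Set.inter_subset_left), ⟨hstart, ReflTransGen.refl⟩, ?_, ?_⟩
  · rintro x l y ⟨⟨hcs, -⟩, hxR, hyR⟩
    exact ⟨⟨(hstep x l y hcs).1, hxR⟩, ⟨(hstep x l y hcs).2, hyR⟩⟩
  · rintro x ⟨htm, hxR⟩
    exact ⟨hterm x htm, hxR⟩

end LLEEAux
namespace LLEEAux

open Relation

variable {V : Type u} {L : Type v}

lemma caseB (C : Chart V L) (mstep : V → L × ℕ → V → Prop)
    (hlab : ∀ x l y, C.step x l y ↔ ∃ n : ℕ, mstep x (l, n) y)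
    (hwit : LLEE.IsWitness mstep C.term) (v : V)
    (hgood : GoodAt mstep v)
    (hA : ¬ ∃ l y, ((∃ k, 0 < k ∧ mstep v (l, k) y) ∧ ¬ mstep v (l, 0) y) ∧
      Relation.ReflTransGen (LLEE.Body mstep) y v) :
    ∃ mstep' : V → L × ℕ → V → Prop,
      (∀ x l y, C.step x l y ↔ ∃ n : ℕ, mstep' x (l, n) y) ∧
      LLEE.IsWitness mstep' C.term ∧
      {x | HasEntry mstep' x} ⊆ {x | HasEntry mstep x} \ {v} := by
  classical
  have hB1 : ∀ (x : V) (p : L × ℕ) (y : V), mstep x p y → C.step x p.1 y := by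
    rintro x ⟨l, m⟩ y h
    exact (hlab x l y).2 ⟨m, h⟩
  refine ⟨fun x p y => (x = v ∧ p.2 = 0 ∧ C.step x p.1 y) ∨ (x ≠ v ∧ mstep x p y), ?_, ?_, ?_⟩
  case _ => -- labeling
    intro x l y
    constructor
    · intro h
      by_cases hx : x = v
      · exact ⟨0, Or.inl ⟨hx, rfl, h⟩⟩
      · obtain ⟨n, hn⟩ := (hlab x l y).1 h
        exact ⟨n, Or.inr ⟨hx, hn⟩⟩
    · rintro ⟨n, ⟨-, -, h⟩ | ⟨-, h⟩⟩
      · exact h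
      · exact hB1 x (l, n) y h
  case _ => -- witness
    set mstep' : V → L × ℕ → V → Prop :=
      fun x p y => (x = v ∧ p.2 = 0 ∧ C.step x p.1 y) ∨ (x ≠ v ∧ mstep x p y) with hd
    have bodyB : ∀ x y, LLEE.Body mstep x y → LLEE.Body mstep' x y := by
      rintro x y ⟨l, hl⟩
      by_cases hx : x = v
      · exact ⟨l, Or.inl ⟨hx, rfl, hB1 x (l, 0) y hl⟩⟩
      · exact ⟨l, Or.inr ⟨hx, hl⟩⟩
    have body'_ne : ∀ x y, x ≠ v → LLEE.Body mstep' x y → LLEE.Body mstep x y := by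
      rintro x y hx ⟨l, ⟨hxv, -, -⟩ | ⟨-, h⟩⟩
      · exact absurd hxv hx
      · exact ⟨l, h⟩
    have entry' : ∀ n x y, 0 < n → LLEE.Entry mstep' n x y →
        x ≠ v ∧ LLEE.Entry mstep n x y := by
      rintro n x y hn ⟨l, ⟨-, h0, -⟩ | ⟨hx, h⟩⟩
      · omega
      · exact ⟨hx, l, h⟩
    have hW1' : ¬ ∃ p : ℕ → V, ∀ i, LLEE.Body mstep' (p i) (p (i + 1)) := by
      rintro ⟨p, hp⟩
      by_cases h : ∀ i, ∃ j, i ≤ j ∧ p j = v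
      · obtain ⟨j₀, -, hj₀⟩ := h 0
        have hne : ∃ d, p (j₀ + 1 + d) = v := by
          obtain ⟨j₁, hle, hj₁⟩ := h (j₀ + 1)
          exact ⟨j₁ - (j₀ + 1), by rwa [Nat.add_sub_cancel' hle]⟩
        have hfd : p (j₀ + 1 + Nat.find hne) = v := Nat.find_spec hne
        have hseg : ∀ e, e ≤ Nat.find hne →
            Relation.ReflTransGen (LLEE.Body mstep) (p (j₀ + 1)) (p (j₀ + 1 + e)) := by
          intro e he
          induction e with
          | zero => exact ReflTransGen.refl
          | succ e ih =>
            have he' : e < Nat.find hne := he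
            have hnv : p (j₀ + 1 + e) ≠ v := Nat.find_min hne he'
            exact (ih he'.le).tail (body'_ne _ _ hnv (hp (j₀ + 1 + e)))
        have hret : Relation.ReflTransGen (LLEE.Body mstep) (p (j₀ + 1)) v :=
          hfd ▸ hseg (Nat.find hne) le_rfl
        have hb0 := hp j₀
        rw [hj₀] at hb0
        obtain ⟨l, hl⟩ := hb0
        have hcs : C.step v l (p (j₀ + 1)) := by
          rcases hl with ⟨-, -, h'⟩ | ⟨hx, -⟩
          · exact h'
          · exact absurd rfl hx
        by_cases h0 : mstep v (l, 0) (p (j₀ + 1))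
        · obtain ⟨q, -, hq⟩ := cycle_inf_path (LLEE.Body mstep) ⟨l, h0⟩ hret
          exact hwit.1 ⟨q, hq⟩
        · obtain ⟨n, hn⟩ := (hlab _ _ _).1 hcs
          have hn0 : 0 < n := Nat.pos_of_ne_zero fun he => h0 (he ▸ hn)
          exact hA ⟨l, p (j₀ + 1), ⟨⟨n, hn0, hn⟩, h0⟩, hret⟩
      · push_neg at h
        obtain ⟨i, hi⟩ := h
        exact hwit.1 ⟨fun k => p (i + k),
          fun k => body'_ne _ _ (hi (i + k) (Nat.le_add_right _ _)) (hp (i + k))⟩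
    have classify : ∀ (w : V) (n : ℕ), w ≠ v → 0 < n → ∀ t ∈ LLEE.loopVerts mstep' w n,
        t ∈ LLEE.loopVerts mstep w n ∨
        (v ∈ LLEE.loopVerts mstep w n ∧ ∃ k, 0 < k ∧ (∃ y, LLEE.Entry mstep k v y) ∧
          t ∈ LLEE.loopVerts mstep v k ∧ t ≠ v) := by
      intro w n hwv hn t ht
      rcases Set.mem_insert_iff.mp ht with rfl | ⟨u, hu, hr⟩
      · exact Or.inl (loopVerts_start_mem _ _ _)
      · have hu' : LLEE.Entry mstep n w u := (entry' n w u hn hu).2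
        clear ht
        induction hr with
        | refl => exact Or.inl (entry_target_mem hu')
        | @tail b c hr' hstep ih =>
          obtain ⟨hbody, hbw⟩ := hstep
          rcases ih with hb | ⟨hvw, k, hk, hke, hb, hbv⟩
          · by_cases hbv : b = v
            · subst hbv
              obtain ⟨l, hl⟩ := hbody
              have hcs : C.step b l c := by
                rcases hl with ⟨-, -, h'⟩ | ⟨hx, -⟩
                · exact h'
                · exact absurd rfl hx
              by_cases h0 : mstep b (l, 0) c
              · exact Or.inl (loopVerts_closed hb hbw ⟨l, h0⟩)
              · obtain ⟨m, hm⟩ := (hlab _ _ _).1 hcs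
                have hm0 : 0 < m := Nat.pos_of_ne_zero fun he => h0 (he ▸ hm)
                by_cases hcv : c = b
                · exact Or.inl (hcv ▸ hb)
                · exact Or.inr ⟨hb, m, hm0, ⟨c, l, hm⟩, entry_target_mem ⟨l, hm⟩, hcv⟩
            · exact Or.inl (loopVerts_closed hb hbw (body'_ne _ _ hbv hbody))
          · have hnoE : ¬ HasEntry mstep b := hgood.2 k hk hke b hb hbv
            have hbody'' : LLEE.Body mstep b c := body'_ne _ _ hbv hbody
            have hc : c ∈ LLEE.loopVerts mstep v k := loopVerts_closed hb hbv hbody''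
            by_cases hcv : c = v
            · exact Or.inl (hcv ▸ hvw)
            · exact Or.inr ⟨hvw, k, hk, hke, hc, hcv⟩
    refine ⟨hW1', ?_, ?_⟩
    · -- W2
      intro w n hn hex
      obtain ⟨u₀, hu₀⟩ := hex
      obtain ⟨hwv, hu₀'⟩ := entry' n w u₀ hn hu₀
      obtain ⟨⟨pold, hp0, hps⟩, hL2o, hL3o⟩ := hwit.2.1 w n hn ⟨u₀, hu₀'⟩
      have lvmono : LLEE.loopVerts mstep w n ⊆ LLEE.loopVerts mstep' w n := by
        refine loopVerts_mono ?_ bodyB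
        rintro u ⟨l, h⟩
        exact ⟨l, Or.inr ⟨hwv, h⟩⟩
      refine ⟨⟨pold, hp0, ?_⟩, ?_, ?_⟩
      · intro i
        obtain ⟨lp, hstep'⟩ := hps i
        obtain ⟨l1, l2⟩ := lp
        rcases hstep' with ⟨hxw, hl2, hms⟩ | ⟨hxlv, hxw, hl2, hms⟩
        · exact ⟨(l1, l2), Or.inl ⟨hxw, hl2,
            Or.inr ⟨by rw [hxw]; exact hwv, hms⟩⟩⟩
        · by_cases hxv : pold i = v
          · exact ⟨(l1, l2), Or.inr ⟨lvmono hxlv, hxw, hl2,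
              Or.inl ⟨hxv, hl2, hB1 _ (l1, l2) _ hms⟩⟩⟩
          · exact ⟨(l1, l2), Or.inr ⟨lvmono hxlv, hxw, hl2, Or.inr ⟨hxv, hms⟩⟩⟩
      · -- L2
        intro p hp
        by_contra hno
        push_neg at hno
        apply hW1'
        refine ⟨fun k => p (k + 1), fun k => ?_⟩
        obtain ⟨lp, hstep'⟩ := hp.2 (k + 1)
        rcases hstep' with ⟨hxw, -, -⟩ | ⟨-, -, hl2, hms⟩
        · exact absurd hxw (hno (k + 1) (Nat.succ_pos k))
        · exact ⟨lp.1, by rw [show ((lp.1, 0) : L × ℕ) = lp from Prod.ext rfl hl2.symm]; exact hms⟩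
      · -- L3
        intro t htv htm
        rcases classify w n hwv hn t htv with h | ⟨hvw, k, hk, hke, ht, htv'⟩
        · exact hL3o t h ⟨h, htm.2⟩
        · exact absurd ((hwit.2.1 v k hk hke).2.2 t ht ⟨ht, htm.2⟩) htv'
    · -- W3
      intro w n hn hex t ht htw m t' hm he'
      obtain ⟨u₀, hu₀⟩ := hex
      obtain ⟨hwv, hu₀'⟩ := entry' n w u₀ hn hu₀
      obtain ⟨htv, he''⟩ := entry' m t t' hm he'
      rcases classify w n hwv hn t ht with h | ⟨hvw, k, hk, hke, htk, htv'⟩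
      · exact hwit.2.2 w n hn ⟨u₀, hu₀'⟩ t h htw m t' hm he''
      · exact absurd ⟨m, hm, t', he''⟩ (hgood.2 k hk hke t htk htv')
  case _ => -- measure
    rintro x ⟨n, hn, y, hy⟩
    rcases hy with ⟨l, ⟨-, h0, -⟩ | ⟨hx, h⟩⟩
    · omega
    · exact ⟨⟨n, hn, y, l, h⟩, hx⟩

end LLEEAux
namespace LLEEAux

open Relation

variable {V : Type u} {L : Type v}

lemma caseA (C : Chart V L) (mstep : V → L × ℕ → V → Prop)
    (hstep : ∀ x l y, C.step x l y → x ∈ C.verts ∧ y ∈ C.verts)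
    (hlab : ∀ x l y, C.step x l y ↔ ∃ n : ℕ, mstep x (l, n) y)
    (hwit : LLEE.IsWitness mstep C.term) (v : V)
    (hgood : GoodAt mstep v) (l₀ : L) (y₀ : V)
    (hpure : (∃ k, 0 < k ∧ mstep v (l₀, k) y₀) ∧ ¬ mstep v (l₀, 0) y₀)
    (hret : Relation.ReflTransGen (LLEE.Body mstep) y₀ v) :
    ∃ U : Set (V × L × V), LEE.IsLoopSubchart C v U ∧
      ∃ mstep' : V → L × ℕ → V → Prop,
        (∀ x l y, (LEE.elim C U).step x l y ↔ ∃ n : ℕ, mstep' x (l, n) y) ∧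
        LLEE.IsWitness mstep' (LEE.elim C U).term ∧
        {x | HasEntry mstep' x} ⊆ {x | HasEntry mstep x} \ {v} := by
  classical
  have hB1 : ∀ (x : V) (p : L × ℕ) (y : V), mstep x p y → C.step x p.1 y := by
    rintro x ⟨l, m⟩ y h
    exact (hlab x l y).2 ⟨m, h⟩
  set U : Set (V × L × V) :=
    {t | t.1 = v ∧ (∃ k, 0 < k ∧ mstep v (t.2.1, k) t.2.2) ∧ ¬ mstep v (t.2.1, 0) t.2.2}
    with hU
  have hU₀ : (v, l₀, y₀) ∈ U := ⟨rfl, hpure.1, hpure.2⟩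
  obtain ⟨k₀, hk₀, hms₀⟩ := hpure.1
  have hvverts : v ∈ C.verts := (hstep v l₀ y₀ (hB1 v (l₀, k₀) y₀ hms₀)).1
  set G : Set V := LEE.genVerts C v U with hG
  have hGtarget : ∀ l u, (v, l, u) ∈ U → u ∈ G :=
    fun l u h => Set.mem_insert_iff.mpr (Or.inr ⟨u, ⟨l, h⟩, ReflTransGen.refl⟩)
  have hGclosed : ∀ z ∈ G, z ≠ v → ∀ l y, C.step z l y → y ∈ G := by
    intro z hz hzv l y h
    rcases Set.mem_insert_iff.mp hz with h' | ⟨u, hu, hr⟩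
    · exact absurd h' hzv
    · exact Set.mem_insert_iff.mpr (Or.inr ⟨u, hu, hr.tail ⟨⟨l, h⟩, hzv⟩⟩)
  have hA1 : ∀ w ∈ G, w = v ∨ ∃ k, 0 < k ∧ (∃ y, LLEE.Entry mstep k v y) ∧
      w ∈ LLEE.loopVerts mstep v k ∧ w ≠ v := by
    intro w hw
    rcases Set.mem_insert_iff.mp hw with h' | ⟨u, ⟨l, hUu⟩, hr⟩
    · exact Or.inl h'
    · obtain ⟨-, ⟨k, hk, hms⟩, -⟩ := hUu
      have base : u = v ∨ ∃ k, 0 < k ∧ (∃ y, LLEE.Entry mstep k v y) ∧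
          u ∈ LLEE.loopVerts mstep v k ∧ u ≠ v := by
        by_cases huv : u = v
        · exact Or.inl huv
        · exact Or.inr ⟨k, hk, ⟨u, l, hms⟩, entry_target_mem ⟨l, hms⟩, huv⟩
      clear hw
      induction hr with
      | refl => exact base
      | @tail b c hr' hstep' ih =>
        obtain ⟨⟨l', hcs⟩, hbv⟩ := hstep'
        rcases ih with h' | ⟨k', hk', hke', hb, hbv'⟩
        · exact absurd h' hbv
        · have hnoE : ¬ HasEntry mstep b := hgood.2 k' hk' hke' b hb hbv'
          have hbody : LLEE.Body mstep b c := by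
            obtain ⟨m, hm⟩ := (hlab _ _ _).1 hcs
            cases m with
            | zero => exact ⟨l', hm⟩
            | succ m => exact absurd ⟨m + 1, Nat.succ_pos m, c, l', hm⟩ hnoE
          have hc := loopVerts_closed hb hbv' hbody
          by_cases hcv : c = v
          · exact Or.inl hcv
          · exact Or.inr ⟨k', hk', hke', hc, hcv⟩
  -- the generated subchart is a loop chart
  have hLS : LEE.IsLoopSubchart C v U := by
    refine ⟨hvverts, ⟨(v, l₀, y₀), hU₀⟩, ?_, ?_, ?_, ?_⟩
    · rintro t ⟨h1, ⟨k, hk, hms⟩, -⟩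
      exact ⟨h1, by rw [h1]; exact hB1 v (t.2.1, k) t.2.2 hms⟩
    · -- L1
      have hr1 : ∃ l, (LEE.genSubchart C v U).step v l y₀ := ⟨l₀, Or.inl ⟨rfl, hU₀⟩⟩
      have hconv : ∀ z, Relation.ReflTransGen (LLEE.Body mstep) z v → z ∈ G →
          Relation.ReflTransGen (fun a b => ∃ l, (LEE.genSubchart C v U).step a l b) z v := by
        intro z hzr
        induction hzr using Relation.ReflTransGen.head_induction_on with
        | refl => exact fun _ => ReflTransGen.refl
        | @head a c hab hbv ih =>
          intro haG
          by_cases hav : a = v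
          · exact hav ▸ ReflTransGen.refl
          · obtain ⟨l, hms⟩ := hab
            have hcs := hB1 a (l, 0) c hms
            exact ReflTransGen.head ⟨l, Or.inr ⟨haG, hav, hcs⟩⟩
              (ih (hGclosed a haG hav l c hcs))
      obtain ⟨p, hp0, hps⟩ :=
        cycle_inf_path (fun a b => ∃ l, (LEE.genSubchart C v U).step a l b)
          hr1 (hconv y₀ hret (hGtarget l₀ y₀ hU₀))
      exact ⟨p, hp0, hps⟩
    · -- L2
      intro p hp
      by_contra hno
      push_neg at hno
      apply hwit.1
      refine ⟨fun k => p (k + 1), fun k => ?_⟩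
      obtain ⟨l, hstep'⟩ := hp.2 (k + 1)
      have hnv : p (k + 1) ≠ v := hno (k + 1) (Nat.succ_pos _)
      rcases hstep' with ⟨hxv, -⟩ | ⟨hGm, hxv, hcs⟩
      · exact absurd hxv hnv
      · rcases hA1 _ hGm with h' | ⟨k', hk', hke', hmem, hne⟩
        · exact absurd h' hxv
        · have hnoE : ¬ HasEntry mstep (p (k + 1)) := hgood.2 k' hk' hke' _ hmem hne
          obtain ⟨m, hm⟩ := (hlab _ _ _).1 hcs
          cases m with
          | zero => exact ⟨l, hm⟩
          | succ m => exact absurd ⟨m + 1, Nat.succ_pos m, _, l, hm⟩ hnoE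
    · -- L3
      rintro t htG ⟨-, htm⟩
      rcases hA1 t htG with h' | ⟨k, hk, hke, hmem, hne⟩
      · exact h'
      · exact (hwit.2.1 v k hk hke).2.2 t hmem ⟨hmem, htm⟩
  -- the new witness on the eliminated chart
  set mstep' : V → L × ℕ → V → Prop :=
    fun x p y => mstep x p y ∧ (LEE.elim C U).step x p.1 y ∧ (x = v → p.2 = 0) with hmd
  refine ⟨U, hLS, mstep', ?_, ?_, ?_⟩
  case _ => -- labeling
    intro x l y
    constructor
    · intro h
      obtain ⟨⟨hcs, hxU⟩, hxR, hyR⟩ := h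
      obtain ⟨n, hn⟩ := (hlab x l y).1 hcs
      by_cases hx : x = v
      · subst hx
        by_cases h0 : mstep x (l, 0) y
        · exact ⟨0, h0, ⟨⟨hcs, hxU⟩, hxR, hyR⟩, fun _ => rfl⟩
        · exact absurd ⟨rfl, ⟨n, Nat.pos_of_ne_zero fun he => h0 (he ▸ hn), hn⟩, h0⟩ hxU
      · exact ⟨n, hn, ⟨⟨hcs, hxU⟩, hxR, hyR⟩, fun hxv => absurd hxv hx⟩
    · rintro ⟨n, -, hD, -⟩
      exact hD
  case _ => -- witness
    have hW1' : ¬ ∃ p : ℕ → V, ∀ i, LLEE.Body mstep' (p i) (p (i + 1)) := by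
      rintro ⟨p, hp⟩
      refine hwit.1 ⟨p, fun i => ?_⟩
      obtain ⟨l, h, -, -⟩ := hp i
      exact ⟨l, h⟩
    have hsub : ∀ (w : V) (n : ℕ),
        LLEE.loopVerts mstep' w n ⊆ LLEE.loopVerts mstep w n := fun w n =>
      loopVerts_mono (fun u ⟨l, h⟩ => ⟨l, h.1⟩) (fun x y ⟨l, h⟩ => ⟨l, h.1⟩)
    refine ⟨hW1', ?_, ?_⟩
    · -- W2
      intro w n hn hex
      obtain ⟨u₀', l₀', hm₀, hD₀, himp₀⟩ := hex
      have hwv : w ≠ v := by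
        intro h'
        have := himp₀ h'
        omega
      obtain ⟨⟨pold, hp0, hps⟩, hL2o, hL3o⟩ := hwit.2.1 w n hn ⟨u₀', l₀', hm₀⟩
      have hwR : w ∈ eR C U := hD₀.2.1
      -- the old loop path survives elimination
      have hInv : ∀ i, pold i ∈ eR C U := by
        intro i
        induction i with
        | zero => exact hp0 ▸ hwR
        | succ i ih =>
          obtain ⟨lp, hstep'⟩ := hps i
          obtain ⟨l1, l2⟩ := lp
          rcases hstep' with ⟨hxw, hl2, hms⟩ | ⟨hxlv, hxw, hl2, hms⟩
          · have hcs := hB1 _ (l1, l2) _ hms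
            have hnU : (pold i, l1, pold (i + 1)) ∉ U := by
              rw [hxw]
              exact fun hUm => hwv hUm.1
            exact eR_closed ih ⟨hcs, hnU⟩
          · have hl2' : l2 = 0 := hl2
            subst hl2'
            have hcs := hB1 _ (l1, 0) _ hms
            have hnU : (pold i, l1, pold (i + 1)) ∉ U := by
              intro hUm
              exact hUm.2.2 (hUm.1 ▸ hms)
            exact eR_closed ih ⟨hcs, hnU⟩
      have hmemb : ∀ i, pold i ∈ LLEE.loopVerts mstep' w n := by
        intro i
        induction i with
        | zero => exact hp0 ▸ loopVerts_start_mem _ _ _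
        | succ i ih =>
          obtain ⟨lp, hstep'⟩ := hps i
          obtain ⟨l1, l2⟩ := lp
          rcases hstep' with ⟨hxw, hl2, hms⟩ | ⟨hxlv, hxw, hl2, hms⟩
          · have hl2' : l2 = n := hl2
            rw [hl2'] at hms
            have hcs := hB1 _ (l1, n) _ hms
            have hnU : (pold i, l1, pold (i + 1)) ∉ U := by
              rw [hxw]
              exact fun hUm => hwv hUm.1
            have hms' : mstep' (pold i) (l1, n) (pold (i + 1)) :=
              ⟨hms, ⟨⟨hcs, hnU⟩, hInv i, hInv (i + 1)⟩, fun hxv => absurd (hxw ▸ hxv) hwv⟩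
            rw [hxw] at hms'
            exact entry_target_mem ⟨l1, hms'⟩
          · have hl2' : l2 = 0 := hl2
            subst hl2'
            have hcs := hB1 _ (l1, 0) _ hms
            have hnU : (pold i, l1, pold (i + 1)) ∉ U := by
              intro hUm
              exact hUm.2.2 (hUm.1 ▸ hms)
            have hms' : mstep' (pold i) (l1, 0) (pold (i + 1)) :=
              ⟨hms, ⟨⟨hcs, hnU⟩, hInv i, hInv (i + 1)⟩, fun _ => rfl⟩
            exact loopVerts_closed ih hxw ⟨l1, hms'⟩
      refine ⟨⟨pold, hp0, ?_⟩, ?_, ?_⟩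
      · -- the path survives
        intro i
        obtain ⟨lp, hstep'⟩ := hps i
        obtain ⟨l1, l2⟩ := lp
        rcases hstep' with ⟨hxw, hl2, hms⟩ | ⟨hxlv, hxw, hl2, hms⟩
        · have hl2' : l2 = n := hl2
          rw [hl2'] at hms
          have hcs := hB1 _ (l1, n) _ hms
          have hnU : (pold i, l1, pold (i + 1)) ∉ U := by
            rw [hxw]
            exact fun hUm => hwv hUm.1
          exact ⟨(l1, n), Or.inl ⟨hxw, rfl,
            ⟨hms, ⟨⟨hcs, hnU⟩, hInv i, hInv (i + 1)⟩, fun hxv => absurd (hxw ▸ hxv) hwv⟩⟩⟩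
        · have hl2' : l2 = 0 := hl2
          subst hl2'
          have hcs := hB1 _ (l1, 0) _ hms
          have hnU : (pold i, l1, pold (i + 1)) ∉ U := by
            intro hUm
            exact hUm.2.2 (hUm.1 ▸ hms)
          exact ⟨(l1, 0), Or.inr ⟨hmemb i, hxw, rfl,
            ⟨hms, ⟨⟨hcs, hnU⟩, hInv i, hInv (i + 1)⟩, fun _ => rfl⟩⟩⟩
      · -- L2
        intro p hp
        by_contra hno
        push_neg at hno
        apply hwit.1
        refine ⟨fun k => p (k + 1), fun k => ?_⟩
        obtain ⟨lp, hstep'⟩ := hp.2 (k + 1)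
        rcases hstep' with ⟨hxw, -, -⟩ | ⟨-, -, hl2, hms'⟩
        · exact absurd hxw (hno (k + 1) (Nat.succ_pos k))
        · exact ⟨lp.1, by
            rw [show ((lp.1, 0) : L × ℕ) = lp from Prod.ext rfl hl2.symm]
            exact hms'.1⟩
      · -- L3
        intro t htv htm
        exact hL3o t (hsub w n htv) ⟨hsub w n htv, htm.2.1⟩
    · -- W3
      intro w n hn hex t ht htw m t' hm he'
      obtain ⟨u₀', l₀', hm₀, -, -⟩ := hex
      obtain ⟨lt, hmt, -, -⟩ := he'
      exact hwit.2.2 w n hn ⟨u₀', l₀', hm₀⟩ t (hsub w n ht) htw m t' hm ⟨lt, hmt⟩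
  case _ => -- measure
    rintro x ⟨n, hn, y, l, hm, hD, himp⟩
    have hx : x ≠ v := by
      intro h'
      have := himp h'
      omega
    exact ⟨⟨n, hn, y, l, hm⟩, hx⟩

end LLEEAux
namespace LLEEAux

open Relation

variable {V : Type u} {L : Type v}

lemma no_inf_of_no_entries (C : Chart V L) (mstep : V → L × ℕ → V → Prop)
    (hlab : ∀ x l y, C.step x l y ↔ ∃ n : ℕ, mstep x (l, n) y)
    (hW1 : ¬ ∃ p : ℕ → V, ∀ i, LLEE.Body mstep (p i) (p (i + 1)))
    (hno : ∀ x, ¬ HasEntry mstep x) : ¬ LEE.HasInfPath C := by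
  rintro ⟨p, -, hp⟩
  apply hW1
  refine ⟨p, fun i => ?_⟩
  obtain ⟨l, hl⟩ := hp i
  obtain ⟨n, hn⟩ := (hlab _ _ _).1 hl
  cases n with
  | zero => exact ⟨l, hn⟩
  | succ m => exact absurd ⟨m + 1, Nat.succ_pos m, p (i + 1), l, hn⟩ (hno (p i))

lemma entries_finite (C : Chart V L) (mstep : V → L × ℕ → V → Prop)
    (hfin : C.verts.Finite)
    (hstep : ∀ x l y, C.step x l y → x ∈ C.verts ∧ y ∈ C.verts)
    (hlab : ∀ x l y, C.step x l y ↔ ∃ n : ℕ, mstep x (l, n) y) :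
    {x | HasEntry mstep x}.Finite := by
  refine hfin.subset ?_
  rintro x ⟨n, hn, y, l, h⟩
  exact (hstep x l y ((hlab x l y).2 ⟨n, h⟩)).1

lemma key (N : ℕ) : ∀ (C : Chart V L) (mstep : V → L × ℕ → V → Prop),
    C.verts.Finite → C.start ∈ C.verts →
    (∀ x l y, C.step x l y → x ∈ C.verts ∧ y ∈ C.verts) →
    (∀ x, C.term x → x ∈ C.verts) →
    (∀ x l y, C.step x l y ↔ ∃ n : ℕ, mstep x (l, n) y) →
    LLEE.IsWitness mstep C.term →
    {x | HasEntry mstep x}.ncard ≤ N →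
    LEE.SatisfiesLEE C := by
  induction N with
  | zero =>
    intro C mstep hfin hstart hstep hterm hlab hwit hN
    have hfinE := entries_finite C mstep hfin hstep hlab
    have hempty : {x | HasEntry mstep x} = ∅ :=
      (Set.ncard_eq_zero hfinE).mp (Nat.le_zero.mp hN)
    refine ⟨C, ReflTransGen.refl, no_inf_of_no_entries C mstep hlab hwit.1 fun x hx => ?_⟩
    exact absurd (hempty ▸ hx : x ∈ (∅ : Set V)) (Set.notMem_empty x)
  | succ N IH =>
    intro C mstep hfin hstart hstep hterm hlab hwit hN
    by_cases hE : ∃ x, HasEntry mstep x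
    · obtain ⟨v, hgood⟩ := exists_good mstep C.term hwit hE
      have hvmem : v ∈ {x | HasEntry mstep x} := hgood.1
      have hfinE := entries_finite C mstep hfin hstep hlab
      by_cases hA : ∃ l y, ((∃ k, 0 < k ∧ mstep v (l, k) y) ∧ ¬ mstep v (l, 0) y) ∧
          Relation.ReflTransGen (LLEE.Body mstep) y v
      · -- case A: eliminate a loop subchart at v
        obtain ⟨l₀, y₀, hpure, hret⟩ := hA
        obtain ⟨U, hLS, mstep', hlab', hwit', hsubE⟩ :=
          caseA C mstep hstep hlab hwit v hgood l₀ y₀ hpure hret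
        obtain ⟨hfin', hstart', hstep', hterm'⟩ := elim_basic C U hfin hstart hstep hterm
        have hss : {x | HasEntry mstep' x} ⊂ {x | HasEntry mstep x} :=
          ⟨hsubE.trans Set.diff_subset, fun hcon => (hsubE (hcon hvmem)).2 rfl⟩
        have hcard : {x | HasEntry mstep' x}.ncard ≤ N := by
          have := Set.ncard_lt_ncard hss hfinE
          omega
        obtain ⟨C'', hrtg, hninf⟩ :=
          IH (LEE.elim C U) mstep' hfin' hstart' hstep' hterm' hlab' hwit' hcard
        exact ⟨C'', ReflTransGen.head ⟨v, U, hLS, rfl⟩ hrtg, hninf⟩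
      · -- case B: relabel only
        obtain ⟨mstep', hlab', hwit', hsubE⟩ := caseB C mstep hlab hwit v hgood hA
        have hss : {x | HasEntry mstep' x} ⊂ {x | HasEntry mstep x} :=
          ⟨hsubE.trans Set.diff_subset, fun hcon => (hsubE (hcon hvmem)).2 rfl⟩
        have hcard : {x | HasEntry mstep' x}.ncard ≤ N := by
          have := Set.ncard_lt_ncard hss hfinE
          omega
        exact IH C mstep' hfin hstart hstep hterm hlab' hwit' hcard
    · push_neg at hE
      exact ⟨C, ReflTransGen.refl, no_inf_of_no_entries C mstep hlab hwit.1 hE⟩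

end LLEEAux
/-- If a (finite) chart has a LLEE-witness, then it satisfies the
loop existence and elimination property LEE. -/
theorem LLEE_witness_implies_LEE {V : Type u} {L : Type v} (C : Chart V L)
    (hfin : C.verts.Finite)
    (hstart : C.start ∈ C.verts)
    (hstep : ∀ x l y, C.step x l y → x ∈ C.verts ∧ y ∈ C.verts)
    (hterm : ∀ x, C.term x → x ∈ C.verts)
    (mstep : V → L × ℕ → V → Prop)
    (hlabeling : ∀ x l y, C.step x l y ↔ ∃ n : ℕ, mstep x (l, n) y)
    (hwitness : LLEE.IsWitness mstep C.term) :
    LEE.SatisfiesLEE C :=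
  LLEEAux.key {x | LLEEAux.HasEntry mstep x}.ncard C mstep hfin hstart hstep hterm
    hlabeling hwitness le_rfl
end

section
/- The projection function π defines a bisimulation between the induced LTS of the stacked star expressions 1-LTS L1(StExp^(*)(A)) and the star expressions LTS L(StExp(A)); that is, the graph of π is a bisimulation between these two LTSs. -/
universe u v w

section Aux
variable {A : Type u}

open SExp StExp

/-- A1: STerm implies termination of the projection. -/
lemma sterm_proj {E : SExp A} (h : SExp.STerm E) : StExp.Term E.proj := by
  induction h with
  | up h => exact h
  | pr _ h2 ih => exact StExp.Term.mul ih h2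

/-- A2: an `a`-SStep projects to a Step. -/
lemma sstep_proj {E E' : SExp A} {l : Option A} (h : SExp.SStep E l E') :
    ∀ a, l = some a → StExp.Step E.proj a E'.proj := by
  induction h with
  | act => intro a ha; cases ha; exact StExp.Step.act
  | addL _ ih => intro a ha; cases ha; exact StExp.Step.addL (ih _ rfl)
  | addR _ ih => intro a ha; cases ha; exact StExp.Step.addR (ih _ rfl)
  | upMulL _ ih => intro a ha; exact StExp.Step.mulL (ih a ha)
  | upMulR h1 _ ih => intro a ha; cases ha; exact StExp.Step.mulR h1 (ih _ rfl)
  | upStar _ ih => intro a ha; cases ha; exact StExp.Step.star (ih _ rfl)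
  | prL _ ih => intro a ha; exact StExp.Step.mulL (ih a ha)
  | prR h1 _ ih => intro a ha; cases ha; exact StExp.Step.mulR (sterm_proj h1) (ih _ rfl)
  | stL _ ih => intro a ha; exact StExp.Step.mulL (ih a ha)
  | stOne => intro a ha; cases ha

/-- A4: a 1-step preserves projected termination backwards. -/
lemma onestep_term {E F : SExp A} (h : SExp.SStep E none F) :
    StExp.Term F.proj → StExp.Term E.proj := by
  generalize hl : (none : Option A) = l at h
  induction h with
  | act | addL | addR | upMulR | upStar | prR => cases hl
  | upMulL _ ih =>
      cases hl
      intro ht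
      cases ht with
      | mul h1 h2 => exact StExp.Term.mul (ih rfl h1) h2
  | prL _ ih =>
      intro ht
      cases ht with
      | mul h1 h2 => exact StExp.Term.mul (ih hl h1) h2
  | stL _ ih =>
      intro ht
      cases ht with
      | mul h1 h2 => exact StExp.Term.mul (ih hl h1) h2
  | stOne h1 =>
      intro _
      exact StExp.Term.mul (sterm_proj h1) StExp.Term.star

/-- A3: a 1-step preserves projected steps backwards. -/
lemma onestep_step {E F : SExp A} (h : SExp.SStep E none F) :
    ∀ a g, StExp.Step F.proj a g → StExp.Step E.proj a g := by
  generalize hl : (none : Option A) = l at h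
  induction h with
  | act | addL | addR | upMulR | upStar | prR => cases hl
  | upMulL hstep ih =>
      cases hl
      intro a g hs
      cases hs with
      | mulL hs => exact StExp.Step.mulL (ih rfl _ _ hs)
      | mulR h1 hs => exact StExp.Step.mulR (onestep_term hstep h1) hs
  | prL hstep ih =>
      intro a g hs
      cases hs with
      | mulL hs => exact StExp.Step.mulL (ih hl _ _ hs)
      | mulR h1 hs =>
          cases hl
          exact StExp.Step.mulR (onestep_term hstep h1) hs
  | stL hstep ih =>
      intro a g hs
      cases hs with
      | mulL hs => exact StExp.Step.mulL (ih hl _ _ hs)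
      | mulR h1 hs =>
          cases hl
          exact StExp.Step.mulR (onestep_term hstep h1) hs
  | stOne h1 =>
      intro a g hs
      exact StExp.Step.mulR (sterm_proj h1) hs

/-- Lemma B: a Step on a star expression is realized by one SStep from `up`. -/
lemma step_to_sstep {e : StExp A} {a : A} {e' : StExp A} (h : StExp.Step e a e') :
    ∃ E', SExp.SStep (SExp.up e) (some a) E' ∧ E'.proj = e' := by
  induction h with
  | act => exact ⟨SExp.up StExp.one, SExp.SStep.act, rfl⟩
  | addL _ ih =>
      obtain ⟨E', hE, hp⟩ := ih
      exact ⟨E', SExp.SStep.addL hE, hp⟩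
  | addR _ ih =>
      obtain ⟨E', hE, hp⟩ := ih
      exact ⟨E', SExp.SStep.addR hE, hp⟩
  | mulL _ ih =>
      obtain ⟨E', hE, hp⟩ := ih
      exact ⟨SExp.pr E' _, SExp.SStep.upMulL hE, by simp [SExp.proj, hp]⟩
  | mulR h1 _ ih =>
      obtain ⟨E', hE, hp⟩ := ih
      exact ⟨E', SExp.SStep.upMulR h1 hE, hp⟩
  | star _ ih =>
      obtain ⟨E', hE, hp⟩ := ih
      exact ⟨SExp.st E' _, SExp.SStep.upStar hE, by simp [SExp.proj, hp]⟩

lemma onestep_lift_pr {E F : SExp A} (e : StExp A)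
    (h : Relation.ReflTransGen SExp.OneStep E F) :
    Relation.ReflTransGen SExp.OneStep (SExp.pr E e) (SExp.pr F e) := by
  induction h with
  | refl => exact Relation.ReflTransGen.refl
  | tail _ h2 ih => exact ih.tail (SExp.SStep.prL h2)

lemma onestep_lift_st {E F : SExp A} (e : StExp A)
    (h : Relation.ReflTransGen SExp.OneStep E F) :
    Relation.ReflTransGen SExp.OneStep (SExp.st E e) (SExp.st F e) := by
  induction h with
  | refl => exact Relation.ReflTransGen.refl
  | tail _ h2 ih => exact ih.tail (SExp.SStep.stL h2)

/-- Lemma C: projected termination implies induced termination. -/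
lemma proj_term_to_iterm {E : SExp A} (h : StExp.Term E.proj) : SExp.ITerm E := by
  induction E with
  | up e => exact ⟨SExp.up e, Relation.ReflTransGen.refl, SExp.STerm.up h⟩
  | pr E₁ e₂ ih =>
      cases h with
      | mul h1 h2 =>
          obtain ⟨F₁, hp, ht⟩ := ih h1
          exact ⟨SExp.pr F₁ e₂, onestep_lift_pr e₂ hp, SExp.STerm.pr ht h2⟩
  | st E₁ e₂ ih =>
      cases h with
      | mul h1 _ =>
          obtain ⟨F₁, hp, ht⟩ := ih h1
          exact ⟨SExp.up (StExp.star e₂),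
            ((onestep_lift_st e₂ hp).tail (SExp.SStep.stOne ht)),
            SExp.STerm.up StExp.Term.star⟩

/-- Backward: a projected step is realized by an induced step. -/
lemma proj_step_to_istep {E : SExp A} {a : A} {e' : StExp A}
    (h : StExp.Step E.proj a e') : ∃ E', SExp.IStep E a E' ∧ E'.proj = e' := by
  induction E generalizing e' with
  | up e =>
      obtain ⟨E', hE, hp⟩ := step_to_sstep h
      exact ⟨E', ⟨SExp.up e, Relation.ReflTransGen.refl, hE⟩, hp⟩
  | pr E₁ e₂ ih =>
      cases h with
      | mulL hs =>
          obtain ⟨E₁', ⟨F, hp, hstep⟩, hpr⟩ := ih hs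
          exact ⟨SExp.pr E₁' e₂,
            ⟨SExp.pr F e₂, onestep_lift_pr e₂ hp, SExp.SStep.prL hstep⟩,
            by simp [SExp.proj, hpr]⟩
      | mulR h1 hs =>
          obtain ⟨F₁, hp, ht⟩ := proj_term_to_iterm (E := E₁) h1
          obtain ⟨E₂', hE, hpr⟩ := step_to_sstep hs
          exact ⟨E₂', ⟨SExp.pr F₁ e₂, onestep_lift_pr e₂ hp, SExp.SStep.prR ht hE⟩, hpr⟩
  | st E₁ e₂ ih =>
      cases h with
      | mulL hs =>
          obtain ⟨E₁', ⟨F, hp, hstep⟩, hpr⟩ := ih hs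
          exact ⟨SExp.st E₁' e₂,
            ⟨SExp.st F e₂, onestep_lift_st e₂ hp, SExp.SStep.stL hstep⟩,
            by simp [SExp.proj, hpr]⟩
      | mulR h1 hs =>
          obtain ⟨F₁, hp, ht⟩ := proj_term_to_iterm (E := E₁) h1
          obtain ⟨E', hE, hpr⟩ := step_to_sstep hs
          exact ⟨E', ⟨SExp.up (StExp.star e₂),
            (onestep_lift_st e₂ hp).tail (SExp.SStep.stOne ht), hE⟩, hpr⟩

lemma istep_proj {E E' : SExp A} {a : A} (h : SExp.IStep E a E') :
    StExp.Step E.proj a E'.proj := by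
  obtain ⟨F, hp, hs⟩ := h
  have hF : StExp.Step F.proj a E'.proj := sstep_proj hs a rfl
  induction hp using Relation.ReflTransGen.head_induction_on with
  | refl => exact hF
  | head h1 _ ih => exact onestep_step h1 a _ ih

lemma iterm_proj {E : SExp A} (h : SExp.ITerm E) : StExp.Term E.proj := by
  obtain ⟨F, hp, ht⟩ := h
  have hF : StExp.Term F.proj := sterm_proj ht
  induction hp using Relation.ReflTransGen.head_induction_on with
  | refl => exact hF
  | head h1 _ ih => exact onestep_term h1 ih

end Aux

/-- The projection function `π` defines a bisimulation between the
induced LTS of the stacked star expressions 1-LTS `L1(StExp^(*)(A))` and the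
star expressions LTS `L(StExp(A))`. -/
theorem proj_defines_bisimulation (A : Type u) :
    IsBisimulation (indSExpLTS A) (stexpLTS A) (fun E f => SExp.proj E = f) := by
  refine ⟨⟨SExp.up StExp.one, StExp.one, rfl⟩, ?_⟩
  rintro E f rfl
  refine ⟨?_, ?_, ?_⟩
  · intro a E' h
    exact ⟨E'.proj, istep_proj h, rfl⟩
  · intro a e' h
    obtain ⟨E', hE, hp⟩ := proj_step_to_istep h
    exact ⟨E', hE, hp⟩
  · exact ⟨iterm_proj, proj_term_to_iterm⟩
end

section
/- In the LTS generated by the TSS T̲ind^(*)(A) the following six rules are admissible: (1) if E1↓(1) and e2↓ then (E1·e2)↓(1); (2) if E1↓(1) then (E1 * e2*)↓(1); (3) if E1 ⇒a E1' then E1·e2 ⇒a E1'·e2; (4) if E1 ⇒a E1' then E1 * e2* ⇒a E1' * e2*; (5) if E1↓(1) and e2 ⇒a E2' then E1·e2 ⇒a E2'; (6) if E1↓(1) and e2* ⇒a E2' then E1 * e2* ⇒a E2'. -/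
universe u v w

lemma up_no_none {A : Type u} {E F : SExp A} {l : Option A} (h : SExp.SStep E l F) :
    ∀ e : StExp A, E = SExp.up e → l ≠ none := by
  induction h with
  | upMulL h ih => exact fun e he => ih _ rfl
  | act => exact fun _ _ h => nomatch h
  | addL _ _ => exact fun _ _ h => nomatch h
  | addR _ _ => exact fun _ _ h => nomatch h
  | upMulR _ _ _ => exact fun _ _ h => nomatch h
  | upStar _ _ => exact fun _ _ h => nomatch h
  | prL _ _ => exact fun e he => nomatch he
  | prR _ _ _ => exact fun e he => nomatch he
  | stL _ _ => exact fun e he => nomatch he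
  | stOne _ => exact fun e he => nomatch he

lemma up_istep {A : Type u} {e : StExp A} {a : A} {E' : SExp A}
    (h : SExp.IndStep (SExp.up e) a E') : SExp.SStep (SExp.up e) (some a) E' := by
  cases h with
  | base h => exact h
  | step h _ => exact absurd rfl (up_no_none h e rfl)

/-- Six admissible rules of the TSS `T̲ind^(*)(A)`. -/
theorem Tind_admissible_rules (A : Type u) :
    (∀ (E₁ : SExp A) (e₂ : StExp A),
      SExp.IndTerm E₁ → StExp.Term e₂ → SExp.IndTerm (SExp.pr E₁ e₂)) ∧
    (∀ (E₁ : SExp A) (e₂ : StExp A),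
      SExp.IndTerm E₁ → SExp.IndTerm (SExp.st E₁ e₂)) ∧
    (∀ (E₁ E₁' : SExp A) (e₂ : StExp A) (a : A),
      SExp.IndStep E₁ a E₁' → SExp.IndStep (SExp.pr E₁ e₂) a (SExp.pr E₁' e₂)) ∧
    (∀ (E₁ E₁' : SExp A) (e₂ : StExp A) (a : A),
      SExp.IndStep E₁ a E₁' → SExp.IndStep (SExp.st E₁ e₂) a (SExp.st E₁' e₂)) ∧
    (∀ (E₁ E₂' : SExp A) (e₂ : StExp A) (a : A),
      SExp.IndTerm E₁ → SExp.IndStep (SExp.up e₂) a E₂' →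
      SExp.IndStep (SExp.pr E₁ e₂) a E₂') ∧
    (∀ (E₁ E₂' : SExp A) (e₂ : StExp A) (a : A),
      SExp.IndTerm E₁ → SExp.IndStep (SExp.up (StExp.star e₂)) a E₂' →
      SExp.IndStep (SExp.st E₁ e₂) a E₂') := by
  refine ⟨?_, ?_, ?_, ?_, ?_, ?_⟩
  · intro E₁ e₂ h ht
    induction h with
    | base h => exact SExp.IndTerm.base (SExp.STerm.pr h ht)
    | step h _ ih => exact SExp.IndTerm.step (SExp.SStep.prL h) ih
  · intro E₁ e₂ h
    induction h with
    | base h =>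
        exact SExp.IndTerm.step (SExp.SStep.stOne h)
          (SExp.IndTerm.base (SExp.STerm.up StExp.Term.star))
    | step h _ ih => exact SExp.IndTerm.step (SExp.SStep.stL h) ih
  · intro E₁ E₁' e₂ a h
    induction h with
    | base h => exact SExp.IndStep.base (SExp.SStep.prL h)
    | step h _ ih => exact SExp.IndStep.step (SExp.SStep.prL h) ih
  · intro E₁ E₁' e₂ a h
    induction h with
    | base h => exact SExp.IndStep.base (SExp.SStep.stL h)
    | step h _ ih => exact SExp.IndStep.step (SExp.SStep.stL h) ih
  · intro E₁ E₂' e₂ a ht hs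
    have hs := up_istep hs
    induction ht with
    | base h => exact SExp.IndStep.base (SExp.SStep.prR h hs)
    | step h _ ih => exact SExp.IndStep.step (SExp.SStep.prL h) ih
  · intro E₁ E₂' e₂ a ht hs
    have hs := up_istep hs
    induction ht with
    | base h => exact SExp.IndStep.step (SExp.SStep.stOne h) (SExp.IndStep.base hs)
    | step h _ ih => exact SExp.IndStep.step (SExp.SStep.stL h) ih
end

section
/- For all stacked star expressions E, E' over A and all actions a ∈ A: if E↓(1) is derivable in T̲ind^(*)(A) then π(E)↓ is derivable in Milner's TSS T(A); and if E ⇒a E' is derivable in T̲ind^(*)(A) then π(E) →a π(E') is derivable in T(A). -/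
universe u v w

namespace TindAux
variable {A : Type u}

lemma sterm_proj {E : SExp A} (h : SExp.STerm E) : StExp.Term (SExp.proj E) := by
  induction h with
  | up h => exact h
  | pr _ h2 ih => exact StExp.Term.mul ih h2

lemma sstep_some {E E' : SExp A} {l : Option A} (h : SExp.SStep E l E') :
    ∀ a, l = some a → StExp.Step (SExp.proj E) a (SExp.proj E') := by
  induction h with
  | act => rintro a ⟨rfl⟩; exact StExp.Step.act
  | addL _ ih => rintro a ⟨rfl⟩; exact StExp.Step.addL (ih _ rfl)
  | addR _ ih => rintro a ⟨rfl⟩; exact StExp.Step.addR (ih _ rfl)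
  | upMulL _ ih => intro a hl; exact StExp.Step.mulL (ih a hl)
  | upMulR h1 _ ih => rintro a ⟨rfl⟩; exact StExp.Step.mulR h1 (ih _ rfl)
  | upStar _ ih => rintro a ⟨rfl⟩; exact StExp.Step.star (ih _ rfl)
  | prL _ ih => intro a hl; exact StExp.Step.mulL (ih a hl)
  | prR h1 _ ih => rintro a ⟨rfl⟩; exact StExp.Step.mulR (sterm_proj h1) (ih _ rfl)
  | stL _ ih => intro a hl; exact StExp.Step.mulL (ih a hl)
  | stOne => rintro a ⟨⟩

lemma sstep_none {E F : SExp A} {l : Option A} (h : SExp.SStep E l F) (hl : l = none) :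
    (StExp.Term (SExp.proj F) → StExp.Term (SExp.proj E)) ∧
    (∀ a e', StExp.Step (SExp.proj F) a e' → StExp.Step (SExp.proj E) a e') := by
  induction h with
  | act => cases hl
  | addL => cases hl
  | addR => cases hl
  | upMulL _ ih =>
    obtain ⟨ih1, ih2⟩ := ih hl
    constructor
    · intro ht; cases ht with | mul h1 h2 => exact StExp.Term.mul (ih1 h1) h2
    · intro a e' hs
      cases hs with
      | mulL h => exact StExp.Step.mulL (ih2 _ _ h)
      | mulR h1 h2 => exact StExp.Step.mulR (ih1 h1) h2
  | upMulR => cases hl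
  | upStar => cases hl
  | prL _ ih =>
    obtain ⟨ih1, ih2⟩ := ih hl
    constructor
    · intro ht; cases ht with | mul h1 h2 => exact StExp.Term.mul (ih1 h1) h2
    · intro a e' hs
      cases hs with
      | mulL h => exact StExp.Step.mulL (ih2 _ _ h)
      | mulR h1 h2 => exact StExp.Step.mulR (ih1 h1) h2
  | prR => cases hl
  | stL _ ih =>
    obtain ⟨ih1, ih2⟩ := ih hl
    constructor
    · intro ht; cases ht with | mul h1 h2 => exact StExp.Term.mul (ih1 h1) h2
    · intro a e' hs
      cases hs with
      | mulL h => exact StExp.Step.mulL (ih2 _ _ h)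
      | mulR h1 h2 => exact StExp.Step.mulR (ih1 h1) h2
  | stOne h1 =>
    constructor
    · intro ht; exact StExp.Term.mul (sterm_proj h1) ht
    · intro a e' hs; exact StExp.Step.mulR (sterm_proj h1) hs

end TindAux

/-- STATEMENT 7 body -/
theorem Tind_projects_to_Milner (A : Type u) :
    (∀ E : SExp A, SExp.IndTerm E → StExp.Term (SExp.proj E)) ∧
    (∀ (E E' : SExp A) (a : A),
      SExp.IndStep E a E' → StExp.Step (SExp.proj E) a (SExp.proj E')) := by
  constructor
  · intro E h
    induction h with
    | base h => exact TindAux.sterm_proj h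
    | step h _ ih => exact (TindAux.sstep_none h rfl).1 ih
  · intro E E' a h
    induction h with
    | base h => exact TindAux.sstep_some h _ rfl
    | step h _ ih => exact (TindAux.sstep_none h rfl).2 _ _ ih
end

section
/- For all stacked star expressions E over A, star expressions e' over A, and actions a ∈ A: if π(E)↓ is derivable in Milner's TSS T(A) then E↓(1) is derivable in T̲ind^(*)(A); and if π(E) →a e' is derivable in T(A) then there exists a stacked star expression E' with π(E') = e' such that E ⇒a E' is derivable in T̲ind^(*)(A). -/
universe u v w

namespace SExpAux

open SExp StExp

variable {A : Type u}

lemma indTerm_pr {E : SExp A} {e : StExp A} (h : SExp.IndTerm E) (he : StExp.Term e) :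
    SExp.IndTerm (SExp.pr E e) := by
  induction h with
  | base h => exact .base (.pr h he)
  | step h _ ih => exact .step (.prL h) ih

lemma indTerm_st {E : SExp A} {e : StExp A} (h : SExp.IndTerm E) :
    SExp.IndTerm (SExp.st E e) := by
  induction h with
  | base h => exact .step (.stOne h) (.base (.up .star))
  | step h _ ih => exact .step (.stL h) ih

lemma term_lift : ∀ E : SExp A, StExp.Term (SExp.proj E) → SExp.IndTerm E := by
  intro E
  induction E with
  | up e => exact fun h => .base (.up h)
  | pr E e ih =>
    intro h
    cases h with
    | mul h1 h2 => exact indTerm_pr (ih h1) h2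
  | st E e ih =>
    intro h
    cases h with
    | mul h1 _ => exact indTerm_st (ih h1)

lemma up_step {e e' : StExp A} {a : A} (h : StExp.Step e a e') :
    ∃ E' : SExp A, SExp.proj E' = e' ∧ SExp.SStep (SExp.up e) (some a) E' := by
  induction h with
  | act => exact ⟨.up .one, rfl, .act⟩
  | addL _ ih => obtain ⟨E', hp, hs⟩ := ih; exact ⟨E', hp, .addL hs⟩
  | addR _ ih => obtain ⟨E', hp, hs⟩ := ih; exact ⟨E', hp, .addR hs⟩
  | mulL _ ih =>
    obtain ⟨E', hp, hs⟩ := ih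
    exact ⟨.pr E' _, by simp [SExp.proj, hp], .upMulL hs⟩
  | mulR ht _ ih => obtain ⟨E', hp, hs⟩ := ih; exact ⟨E', hp, .upMulR ht hs⟩
  | star _ ih =>
    obtain ⟨E', hp, hs⟩ := ih
    exact ⟨.st E' _, by simp [SExp.proj, hp], .upStar hs⟩

lemma indStep_pr {E E' : SExp A} {e : StExp A} {a : A} (h : SExp.IndStep E a E') :
    SExp.IndStep (SExp.pr E e) a (SExp.pr E' e) := by
  induction h with
  | base h => exact .base (.prL h)
  | step h _ ih => exact .step (.prL h) ih

lemma indStep_st {E E' : SExp A} {e : StExp A} {a : A} (h : SExp.IndStep E a E') :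
    SExp.IndStep (SExp.st E e) a (SExp.st E' e) := by
  induction h with
  | base h => exact .base (.stL h)
  | step h _ ih => exact .step (.stL h) ih

lemma indTerm_prR {E : SExp A} {e₂ : StExp A} {a : A} {E₂' : SExp A}
    (h : SExp.IndTerm E) (hs : SExp.SStep (SExp.up e₂) (some a) E₂') :
    SExp.IndStep (SExp.pr E e₂) a E₂' := by
  induction h with
  | base h => exact .base (.prR h hs)
  | step h _ ih => exact .step (.prL h) ih

lemma indTerm_stR {E : SExp A} {e₂ : StExp A} {a : A} {E' : SExp A}
    (h : SExp.IndTerm E) (hs : SExp.SStep (SExp.up (StExp.star e₂)) (some a) E') :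
    SExp.IndStep (SExp.st E e₂) a E' := by
  induction h with
  | base h => exact .step (.stOne h) (.base hs)
  | step h _ ih => exact .step (.stL h) ih

end SExpAux

/-- Derivability in Milner's TSS `T(A)` for the projection lifts
back to derivability in `T̲ind^(*)(A)`. -/
theorem Milner_lifts_to_Tind (A : Type u) :
    (∀ E : SExp A, StExp.Term (SExp.proj E) → SExp.IndTerm E) ∧
    (∀ (E : SExp A) (a : A) (e' : StExp A),
      StExp.Step (SExp.proj E) a e' →
      ∃ E' : SExp A, SExp.proj E' = e' ∧ SExp.IndStep E a E') := by
  refine ⟨SExpAux.term_lift, ?_⟩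
  intro E
  induction E with
  | up e =>
    intro a e' h
    obtain ⟨E', hp, hs⟩ := SExpAux.up_step h
    exact ⟨E', hp, .base hs⟩
  | pr E₁ e₂ ih =>
    intro a e' h
    cases h with
    | mulL h =>
      obtain ⟨E₁', hp, hs⟩ := ih _ _ h
      exact ⟨.pr E₁' e₂, by simp [SExp.proj, hp], SExpAux.indStep_pr hs⟩
    | mulR ht h =>
      obtain ⟨E₂', hp, hs⟩ := SExpAux.up_step h
      exact ⟨E₂', hp, SExpAux.indTerm_prR (SExpAux.term_lift _ ht) hs⟩
  | st E₁ e₂ ih =>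
    intro a e' h
    cases h with
    | mulL h =>
      obtain ⟨E₁', hp, hs⟩ := ih _ _ h
      exact ⟨.st E₁' e₂, by simp [SExp.proj, hp], SExpAux.indStep_st hs⟩
    | mulR ht h =>
      obtain ⟨E', hp, hs⟩ := SExpAux.up_step h
      exact ⟨E', hp, SExpAux.indTerm_stR (SExpAux.term_lift _ ht) hs⟩
end

section
/- For all stacked star expressions E, E' over A and actions a ∈ A: if E↓ is derivable in T̲^(*)(A), then E is a star expression and E↓ is derivable in Milner's TSS T(A); and if E →a E' is derivable in T̲^(*)(A) (with proper action label a ∈ A), then π(E) →a π(E') is derivable in T(A). -/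
universe u v w

lemma sterm_aux {A : Type u} : ∀ E : SExp A, SExp.STerm E →
    SExp.IsStExp E ∧ StExp.Term (SExp.proj E) := by
  intro E h
  induction h with
  | up h => exact ⟨trivial, h⟩
  | pr _ h2 ih => exact ⟨ih.1, StExp.Term.mul ih.2 h2⟩

lemma sstep_aux {A : Type u} : ∀ (E : SExp A) (l : Option A) (E' : SExp A),
    SExp.SStep E l E' → ∀ a : A, l = some a →
    StExp.Step (SExp.proj E) a (SExp.proj E') := by
  intro E l E' h
  induction h with
  | act => rintro a ⟨rfl⟩; exact StExp.Step.act
  | addL _ ih => rintro a ⟨rfl⟩; exact StExp.Step.addL (ih _ rfl)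
  | addR _ ih => rintro a ⟨rfl⟩; exact StExp.Step.addR (ih _ rfl)
  | upMulL _ ih => rintro a rfl; exact StExp.Step.mulL (ih _ rfl)
  | upMulR h1 _ ih => rintro a ⟨rfl⟩; exact StExp.Step.mulR h1 (ih _ rfl)
  | upStar _ ih => rintro a ⟨rfl⟩; exact StExp.Step.star (ih _ rfl)
  | prL _ ih => rintro a rfl; exact StExp.Step.mulL (ih _ rfl)
  | prR h1 _ ih => rintro a ⟨rfl⟩; exact StExp.Step.mulR (sterm_aux _ h1).2 (ih _ rfl)
  | stL _ ih => rintro a rfl; exact StExp.Step.mulL (ih _ rfl)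
  | stOne => rintro a h; cases h

/-- If `E↓` is derivable in `T̲^(*)(A)` then `E` is a star
expression and `E↓` is derivable in `T(A)`; and proper transitions derivable
in `T̲^(*)(A)` project to transitions derivable in `T(A)`. -/
theorem Tstack_projects_to_Milner (A : Type u) :
    (∀ E : SExp A, SExp.STerm E → SExp.IsStExp E ∧ StExp.Term (SExp.proj E)) ∧
    (∀ (E E' : SExp A) (a : A),
      SExp.SStep E (some a) E' → StExp.Step (SExp.proj E) a (SExp.proj E')) := by
  exact ⟨sterm_aux, fun E E' a h => sstep_aux E _ E' h a rfl⟩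
end

section
/- For all stacked star expressions E, Ẽ over A: if E →1 Ẽ is derivable in T̲^(*)(A), then (i) π(Ẽ)↓ derivable in Milner's TSS T(A) implies π(E)↓ derivable in T(A), and (ii) for every action a ∈ A and star expression e', π(Ẽ) →a e' derivable in T(A) implies π(E) →a e' derivable in T(A). -/
universe u v w

lemma STerm_proj {A : Type u} {E : SExp A} (h : SExp.STerm E) :
    StExp.Term (SExp.proj E) := by
  induction h with
  | up h => exact h
  | pr _ h ih => exact StExp.Term.mul ih h

/-- If `E →1 Ẽ` is derivable in `T̲^(*)(A)`, then termination
and transitions of `π(Ẽ)` in `T(A)` are inherited by `π(E)`. -/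
theorem one_step_preserves_projection_behaviour {A : Type u} (E Etil : SExp A)
    (h : SExp.SStep E none Etil) :
    (StExp.Term (SExp.proj Etil) → StExp.Term (SExp.proj E)) ∧
    (∀ (a : A) (e' : StExp A),
      StExp.Step (SExp.proj Etil) a e' → StExp.Step (SExp.proj E) a e') := by
  generalize hl : (none : Option A) = l at h
  induction h with
  | act => cases hl
  | addL _ => cases hl
  | addR _ => cases hl
  | upMulL h ih =>
    obtain ⟨iht, ihs⟩ := ih hl
    constructor
    · intro ht
      cases ht with
      | mul ht1 ht2 => exact StExp.Term.mul (iht ht1) ht2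
    · intro a e' hs
      cases hs with
      | mulL h' => exact StExp.Step.mulL (ihs _ _ h')
      | mulR ht h' => exact StExp.Step.mulR (iht ht) h'
  | upMulR _ _ => cases hl
  | prR _ _ => cases hl
  | upStar _ => cases hl
  | prL _ ih =>
    obtain ⟨iht, ihs⟩ := ih hl
    constructor
    · intro ht
      cases ht with
      | mul ht1 ht2 => exact StExp.Term.mul (iht ht1) ht2
    · intro a e' hs
      cases hs with
      | mulL h' => exact StExp.Step.mulL (ihs _ _ h')
      | mulR ht h' => exact StExp.Step.mulR (iht ht) h'
  | stL _ ih =>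
    obtain ⟨iht, ihs⟩ := ih hl
    constructor
    · intro ht
      cases ht with
      | mul ht1 ht2 => exact StExp.Term.mul (iht ht1) ht2
    · intro a e' hs
      cases hs with
      | mulL h' => exact StExp.Step.mulL (ihs _ _ h')
      | mulR ht h' => exact StExp.Step.mulR (iht ht) h'
  | stOne ht =>
    constructor
    · intro _; exact StExp.Term.mul (STerm_proj ht) StExp.Term.star
    · intro a e' hs; exact StExp.Step.mulR (STerm_proj ht) hs
end
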